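/- arXiv:1905.13606 — 2 statements merged into one kernel-verified Lean document; each statement's English description precedes it below -/
import Mathlib

section
/- For every L > 0 there exists ε > 0 such that the following holds: for every c with 1/L ≤ c ≤ L and every h* with 1/L ≤ h* ≤ L, set J = −c·h*; then every 2π-periodic C³ function h : ℝ → ℝ with h(θ) > 0 for all θ, satisfying −c·h(θ) + h(θ)³·(h'(θ) + h'''(θ)) = J for all θ ∈ ℝ and |h(θ) − h*| ≤ ε for all θ, satisfies h(θ) = h* for all θ. -/
open Real MeasureTheory Set

private lemma periodic_deriv' (f : ℝ → ℝ) (T : ℝ) (hp : Function.Periodic f T) :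
    Function.Periodic (deriv f) T := by
  intro x
  have e : (fun y => f (y + T)) = f := funext hp
  rw [← deriv_comp_add_const f T x, e]

/-- Near-constant travelling waves in the dominant-surface-tension case are
    the constant h*: for 1/L ≤ c ≤ L and 1/L ≤ h* ≤ L, any positive
    2π-periodic C³ solution of −c·h + h³(h' + h''') = −c·h* that stays
    ε-close to h* equals h*. -/
theorem stmt_7 (L : ℝ) (hL : 0 < L) :
    ∃ ε : ℝ, 0 < ε ∧
      ∀ c : ℝ, 1 / L ≤ c → c ≤ L →
        ∀ hstar : ℝ, 1 / L ≤ hstar → hstar ≤ L →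
          ∀ h : ℝ → ℝ, Function.Periodic h (2 * π) → ContDiff ℝ 3 h →
            (∀ θ, 0 < h θ) →
            (∀ θ, -c * h θ + (h θ) ^ 3 * (deriv h θ + iteratedDeriv 3 h θ)
                = -c * hstar) →
            (∀ θ : ℝ, |h θ - hstar| ≤ ε) →
            ∀ θ : ℝ, h θ = hstar := by
  refine ⟨1, one_pos, ?_⟩
  intro c hc1 _ hstar _ _ h hper hC3 hpos heq _ θ₀
  have hcpos : 0 < c := lt_of_lt_of_le (by positivity) hc1
  -- differentiability bookkeeping
  have h3 : ContDiff ℝ ((2:ℕ)+1) h := by exact_mod_cast hC3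
  obtain ⟨hd1, -, hc2⟩ := contDiff_succ_iff_deriv.mp h3
  have h2 : ContDiff ℝ ((1:ℕ)+1) (deriv h) := by exact_mod_cast hc2
  obtain ⟨hd2, -, hc1'⟩ := contDiff_succ_iff_deriv.mp h2
  have hd3 : Differentiable ℝ (deriv (deriv h)) := hc1'.differentiable (by simp)
  have hiter : iteratedDeriv 3 h = deriv (deriv (deriv h)) := by
    rw [show (3:ℕ) = 2+1 from rfl, iteratedDeriv_succ, show (2:ℕ) = 1+1 from rfl,
      iteratedDeriv_succ, iteratedDeriv_one]
  -- the potential F and the nonnegative density φ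
  set F : ℝ → ℝ := fun x =>
    (h x - hstar) ^ 2 / 2 + (h x - hstar) * deriv (deriv h) x - (deriv h x) ^ 2 / 2 with hFdef
  set φ : ℝ → ℝ := fun x => c * (h x - hstar) ^ 2 / (h x) ^ 3 with hφdef
  have hF : ∀ x, HasDerivAt F (φ x) x := by
    intro x
    have H1 : HasDerivAt h (deriv h x) x := (hd1 x).hasDerivAt
    have H2 : HasDerivAt (deriv h) (deriv (deriv h) x) x := (hd2 x).hasDerivAt
    have H3 : HasDerivAt (deriv (deriv h)) (deriv (deriv (deriv h)) x) x := (hd3 x).hasDerivAt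
    have key : HasDerivAt F
        ((h x - hstar) * (deriv h x + deriv (deriv (deriv h)) x)) x := by
      have := ((((H1.sub_const hstar).pow 2).div_const 2).add
        ((H1.sub_const hstar).mul H3)).sub ((H2.pow 2).div_const 2)
      refine this.congr_deriv ?_
      ring
    have hx3 : (h x) ^ 3 ≠ 0 := by have := hpos x; positivity
    have e : deriv h x + deriv (deriv (deriv h)) x = c * (h x - hstar) / (h x) ^ 3 := by
      rw [eq_div_iff hx3]
      have := heq x
      rw [hiter] at this
      linarith
    rw [e] at key
    convert key using 1
    simp only [hφdef]
    ring
  have hcont : Continuous φ := by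
    have hh := hC3.continuous
    exact (continuous_const.mul ((hh.sub continuous_const).pow 2)).div (hh.pow 3)
      (fun x => by have := hpos x; positivity)
  have hπ := Real.pi_pos
  have hle : θ₀ - 2 * π ≤ θ₀ + 2 * π := by linarith
  have hint : IntervalIntegrable φ volume (θ₀ - 2 * π) (θ₀ + 2 * π) :=
    hcont.intervalIntegrable _ _
  have hperd : Function.Periodic (deriv h) (2 * π) := periodic_deriv' h _ hper
  have hperdd : Function.Periodic (deriv (deriv h)) (2 * π) := periodic_deriv' _ _ hperd
  have hFper : Function.Periodic F (2 * π) := by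
    intro x
    simp only [hFdef, hper x, hperd x, hperdd x]
  have hI0 : ∫ x in (θ₀ - 2 * π)..(θ₀ + 2 * π), φ x = 0 := by
    rw [intervalIntegral.integral_eq_sub_of_hasDerivAt (fun x _ => hF x) hint]
    have e1 : F (θ₀ + 2 * π) = F θ₀ := hFper θ₀
    have e2 : F θ₀ = F (θ₀ - 2 * π) := by
      have := hFper (θ₀ - 2 * π); rw [sub_add_cancel] at this; rw [this]
    rw [e1, e2, sub_self]
  have hnn : 0 ≤ᵐ[volume.restrict (Ioc (θ₀ - 2 * π) (θ₀ + 2 * π))] φ :=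
    Filter.Eventually.of_forall fun x => by
      have h1 := hpos x
      have : (0:ℝ) ≤ c * (h x - hstar) ^ 2 / (h x) ^ 3 := by positivity
      simpa [hφdef] using this
  have hae : φ =ᵐ[volume.restrict (Ioc (θ₀ - 2 * π) (θ₀ + 2 * π))] 0 :=
    (intervalIntegral.integral_eq_zero_iff_of_le_of_nonneg_ae hle hnn hint).mp hI0
  have heqOn : Set.EqOn φ 0 (Ioo (θ₀ - 2 * π) (θ₀ + 2 * π)) := by
    exact Measure.eqOn_open_of_ae_eq
      (ae_restrict_of_ae_restrict_of_subset Ioo_subset_Ioc_self hae) isOpen_Ioo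
      hcont.continuousOn continuousOn_const
  have hmem : θ₀ ∈ Ioo (θ₀ - 2 * π) (θ₀ + 2 * π) := ⟨by linarith, by linarith⟩
  have hφ0 : c * (h θ₀ - hstar) ^ 2 / (h θ₀) ^ 3 = 0 := heqOn hmem
  have hx3 : (h θ₀) ^ 3 ≠ 0 := by have := hpos θ₀; positivity
  rw [div_eq_zero_iff] at hφ0
  rcases hφ0 with hφ0 | hφ0
  · rcases mul_eq_zero.mp hφ0 with hc | hsq
    · exact absurd hc (ne_of_gt hcpos)
    · have := pow_eq_zero_iff (n := 2) (by norm_num) |>.mp hsq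
      linarith
  · exact absurd hφ0 hx3
end

section
/- Let h* > 0. A 2π-periodic C⁴ function h : ℝ → ℝ with h(θ) > 0 for all θ satisfies (d/dθ)[h(θ)³·(h'(θ) + h'''(θ))] = 0 for all θ together with ∫₀^{2π} h(θ) dθ = 2π·h* if and only if there exist c₂ ∈ ℝ and θ₀ ∈ ℝ with |c₂| < h* such that h(θ) = h* + c₂·sin(θ − θ₀) for all θ ∈ ℝ. -/
open Real


lemma periodic_deriv'_s9 {f : ℝ → ℝ} {c : ℝ} (hf : Function.Periodic f c) :
    Function.Periodic (deriv f) c := by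
  intro x
  have : (fun y => f (y + c)) = f := funext hf
  calc deriv f (x + c) = deriv (fun y => f (y + c)) x := (deriv_comp_add_const f c x).symm
    _ = deriv f x := by rw [this]

lemma harmonicODE (g : ℝ → ℝ) (hg : ContDiff ℝ 2 g)
    (hode : ∀ θ, deriv (deriv g) θ = - g θ) :
    ∀ θ, g θ = g 0 * Real.cos θ + deriv g 0 * Real.sin θ := by
  set a := g 0 with ha
  set b := deriv g 0 with hb
  have hg1 : Differentiable ℝ g := hg.differentiable (by norm_num)
  have hg' : ContDiff ℝ 1 (deriv g) := by
    have : ContDiff ℝ (1 + 1 : ℕ) g := by norm_num [hg]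
    exact (contDiff_succ_iff_deriv.mp this).2.2
  have hg2 : Differentiable ℝ (deriv g) := hg'.differentiable (by norm_num)
  set f : ℝ → ℝ := fun θ => g θ - (a * Real.cos θ + b * Real.sin θ) with hf
  set f' : ℝ → ℝ := fun θ => deriv g θ - (-(a * Real.sin θ) + b * Real.cos θ) with hf'
  have df : ∀ θ, HasDerivAt f (f' θ) θ := by
    intro θ
    exact ((hg1 θ).hasDerivAt).sub
      ((((Real.hasDerivAt_cos θ).const_mul a)).add ((Real.hasDerivAt_sin θ).const_mul b))
      |>.congr_deriv (by ring)
  have df' : ∀ θ, HasDerivAt f' (-(f θ)) θ := by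
    intro θ
    have h1 : HasDerivAt (deriv g) (- g θ) θ := by
      have := (hg2 θ).hasDerivAt
      rwa [hode θ] at this
    have h2 : HasDerivAt (fun θ => -(a * Real.sin θ) + b * Real.cos θ)
        (-(a * Real.cos θ) + b * (-Real.sin θ)) θ :=
      (((Real.hasDerivAt_sin θ).const_mul a).neg).add ((Real.hasDerivAt_cos θ).const_mul b)
    exact (h1.sub h2).congr_deriv (by simp [hf]; ring)
  set E : ℝ → ℝ := fun θ => f θ ^ 2 + f' θ ^ 2 with hE
  have dE : ∀ θ, HasDerivAt E 0 θ := by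
    intro θ
    have := (((df θ).pow 2).add ((df' θ).pow 2))
    exact this.congr_deriv (by ring)
  have hEconst : ∀ θ, E θ = E 0 := by
    intro θ
    exact is_const_of_deriv_eq_zero (fun x => (dE x).differentiableAt)
      (fun x => (dE x).deriv) θ 0
  have hE0 : E 0 = 0 := by
    simp [hE, hf, hf', ← ha, ← hb]
  intro θ
  have h1 : f θ ^ 2 + f' θ ^ 2 = 0 := by rw [← hE0]; exact hEconst θ
  have h2 : f θ = 0 := by nlinarith [sq_nonneg (f θ), sq_nonneg (f' θ)]
  have : g θ - (a * Real.cos θ + b * Real.sin θ) = 0 := h2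
  linarith

/-- Classification of positive 2π-periodic C⁴ solutions of
    ∂_θ(h³(h' + h''')) = 0 with prescribed average h*: they are exactly the
    functions h* + c₂ sin(θ − θ₀) with |c₂| < h*. -/
theorem stmt_9 (hstar : ℝ) (hpos : 0 < hstar) (h : ℝ → ℝ) :
    (Function.Periodic h (2 * π) ∧ ContDiff ℝ 4 h ∧ (∀ θ, 0 < h θ) ∧
      (∀ θ : ℝ, deriv (fun φ => (h φ) ^ 3 * (deriv h φ + iteratedDeriv 3 h φ)) θ = 0) ∧
      (∫ θ in (0:ℝ)..(2 * π), h θ) = 2 * π * hstar)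
    ↔ ∃ c₂ θ₀ : ℝ, |c₂| < hstar ∧
        ∀ θ : ℝ, h θ = hstar + c₂ * Real.sin (θ - θ₀) := by
  constructor
  · rintro ⟨hper, hC, hp, heq, hint⟩
    -- regularity ladder
    have hC3 : ContDiff ℝ 3 (deriv h) := by
      have : ContDiff ℝ ((3:ℕ) + 1) h := by norm_num [hC]
      exact (contDiff_succ_iff_deriv.mp this).2.2
    have hC2 : ContDiff ℝ 2 (deriv (deriv h)) := by
      have : ContDiff ℝ ((2:ℕ) + 1) (deriv h) := by norm_num [hC3]
      exact (contDiff_succ_iff_deriv.mp this).2.2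
    have hC1 : ContDiff ℝ 1 (deriv (deriv (deriv h))) := by
      have : ContDiff ℝ ((1:ℕ) + 1) (deriv (deriv h)) := by norm_num [hC2]
      exact (contDiff_succ_iff_deriv.mp this).2.2
    have h3 : iteratedDeriv 3 h = deriv (deriv (deriv h)) := by
      rw [show (3:ℕ) = 2 + 1 from rfl, iteratedDeriv_succ, show (2:ℕ) = 1 + 1 from rfl,
        iteratedDeriv_succ, iteratedDeriv_one]
    set H1 := deriv h with hH1
    set H2 := deriv H1 with hH2
    set H3 := deriv H2 with hH3
    have hdh : Differentiable ℝ h := hC.differentiable (by norm_num)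
    have hd1 : Differentiable ℝ H1 := hC3.differentiable (by norm_num)
    have hd2 : Differentiable ℝ H2 := hC2.differentiable (by norm_num)
    have hd3 : Differentiable ℝ H3 := hC1.differentiable (by norm_num)
    -- F is constant
    set F : ℝ → ℝ := fun φ => h φ ^ 3 * (H1 φ + H3 φ) with hF
    have heqF : ∀ θ, deriv F θ = 0 := by
      intro θ; have := heq θ; rwa [h3] at this
    have hdF : Differentiable ℝ F := (hdh.pow 3).mul (hd1.add hd3)
    have hFc : ∀ θ, F θ = F 0 := fun θ => is_const_of_deriv_eq_zero hdF heqF θ 0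
    set q := F 0 with hq
    -- the integral of H1 + H3 over a period is zero
    have hperH1 : Function.Periodic H1 (2 * π) := periodic_deriv'_s9 hper
    have hperH2 : Function.Periodic H2 (2 * π) := periodic_deriv'_s9 hperH1
    have h2pi : (0:ℝ) < 2 * π := by positivity
    have hiH1 : (∫ θ in (0:ℝ)..(2 * π), H1 θ) = 0 := by
      rw [intervalIntegral.integral_deriv_eq_sub (fun x _ => hdh x)
        ((hC3.continuous).intervalIntegrable _ _)]
      have := hper 0
      simp only [zero_add] at this
      rw [this, sub_self]
    have hiH3 : (∫ θ in (0:ℝ)..(2 * π), H3 θ) = 0 := by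
      rw [intervalIntegral.integral_deriv_eq_sub (fun x _ => hd2 x)
        ((hC1.continuous).intervalIntegrable _ _)]
      have := hperH2 0
      simp only [zero_add] at this
      rw [this, sub_self]
    -- q = 0
    have hform : ∀ θ, H1 θ + H3 θ = q * (h θ ^ 3)⁻¹ := by
      intro θ
      have hthis := hFc θ
      simp only [hF] at hthis
      have hne : h θ ^ 3 ≠ 0 := pow_ne_zero 3 (hp θ).ne'
      rw [eq_mul_inv_iff_mul_eq₀ hne]
      linear_combination hthis
    have hqz : q = 0 := by
      have hI : (∫ θ in (0:ℝ)..(2 * π), (h θ ^ 3)⁻¹) > 0 := by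
        apply intervalIntegral.intervalIntegral_pos_of_pos
        · exact (((hC.continuous).pow 3).inv₀ (fun x => pow_ne_zero 3 (hp x).ne')).intervalIntegrable _ _
        · intro x; exact inv_pos.mpr (pow_pos (hp x) 3)
        · exact h2pi
      have hsum : (∫ θ in (0:ℝ)..(2 * π), (H1 θ + H3 θ)) = 0 := by
        rw [intervalIntegral.integral_add ((hC3.continuous).intervalIntegrable _ _)
          ((hC1.continuous).intervalIntegrable _ _), hiH1, hiH3, add_zero]
      have : (∫ θ in (0:ℝ)..(2 * π), (H1 θ + H3 θ))
          = q * ∫ θ in (0:ℝ)..(2 * π), (h θ ^ 3)⁻¹ := by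
        rw [← intervalIntegral.integral_const_mul]
        exact intervalIntegral.integral_congr (fun x _ => hform x)
      rw [hsum] at this
      rcases mul_eq_zero.mp this.symm with h0 | h0
      · exact h0
      · exact absurd h0 (ne_of_gt hI)
    have hzero : ∀ θ, H1 θ + H3 θ = 0 := by
      intro θ; rw [hform θ, hqz, zero_mul]
    -- H1 solves the harmonic oscillator
    have hode : ∀ θ, deriv (deriv H1) θ = - H1 θ := by
      intro θ
      rw [← hH2, ← hH3]
      linarith [hzero θ]
    have hHarm := harmonicODE H1 (hC3.of_le (by norm_num)) hode
    set a := H1 0 with ha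
    set b := deriv H1 0 with hb
    -- integrate once: h θ = (h 0 + b) + a sin θ - b cos θ
    have dG : ∀ θ : ℝ, HasDerivAt (fun θ => h θ - (a * Real.sin θ - b * Real.cos θ)) 0 θ := by
      intro θ
      have dtrig : HasDerivAt (fun θ => a * Real.sin θ - b * Real.cos θ)
          (a * Real.cos θ + b * Real.sin θ) θ :=
        (((Real.hasDerivAt_sin θ).const_mul a).sub
          ((Real.hasDerivAt_cos θ).const_mul b)).congr_deriv (by ring)
      refine ((hdh θ).hasDerivAt.sub dtrig).congr_deriv ?_
      have : deriv h θ = a * Real.cos θ + b * Real.sin θ := by rw [← hH1, hHarm θ]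
      rw [this]; ring
    have hconst : ∀ θ : ℝ, h θ - (a * Real.sin θ - b * Real.cos θ)
        = h 0 - (a * Real.sin 0 - b * Real.cos 0) :=
      fun θ => is_const_of_deriv_eq_zero (fun x => (dG x).differentiableAt)
        (fun x => (dG x).deriv) θ 0
    have hrep : ∀ θ : ℝ, h θ = (h 0 + b) + (a * Real.sin θ - b * Real.cos θ) := by
      intro θ
      have := hconst θ
      simp only [Real.sin_zero, Real.cos_zero] at this
      linarith
    -- average condition
    have hcount : Continuous (fun θ : ℝ => a * Real.sin θ - b * Real.cos θ) := by fun_prop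
    have hmean : h 0 + b = hstar := by
      have hI : (∫ θ in (0:ℝ)..(2 * π), h θ)
          = ∫ θ in (0:ℝ)..(2 * π), ((h 0 + b) + (a * Real.sin θ - b * Real.cos θ)) :=
        intervalIntegral.integral_congr (fun x _ => hrep x)
      rw [intervalIntegral.integral_add intervalIntegrable_const (hcount.intervalIntegrable _ _),
        intervalIntegral.integral_sub
          ((by fun_prop : Continuous fun x : ℝ => a * Real.sin x).intervalIntegrable _ _)
          ((by fun_prop : Continuous fun x : ℝ => b * Real.cos x).intervalIntegrable _ _),
        intervalIntegral.integral_const_mul, intervalIntegral.integral_const_mul,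
        integral_sin, integral_cos] at hI
      simp only [Real.cos_two_pi, Real.sin_two_pi, Real.cos_zero, Real.sin_zero] at hI
      rw [hI] at hint
      have h2ne : (2 * π : ℝ) ≠ 0 := ne_of_gt h2pi
      rw [intervalIntegral.integral_const, smul_eq_mul] at hint
      linarith [mul_left_cancel₀ h2ne (by linarith [hint] : 2 * π * (h 0 + b) = 2 * π * hstar)]
    have hrep' : ∀ θ : ℝ, h θ = hstar + (a * Real.sin θ - b * Real.cos θ) := by
      intro θ; rw [hrep θ, hmean]
    -- produce c₂ and θ₀
    by_cases hab : a = 0 ∧ b = 0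
    · refine ⟨0, 0, by simpa using hpos, ?_⟩
      intro θ
      rw [hrep' θ, hab.1, hab.2]
      ring
    · set z : ℂ := ⟨a, b⟩ with hz
      have hzne : z ≠ 0 := by
        intro hzz
        apply hab
        rw [Complex.ext_iff] at hzz
        exact ⟨hzz.1, hzz.2⟩
      set r := ‖z‖ with hr
      have hrpos : 0 < r := norm_pos_iff.mpr hzne
      have hcosarg : Real.cos (Complex.arg z) = a / r := by
        rw [Complex.cos_arg hzne]
      have hsinarg : Real.sin (Complex.arg z) = b / r := by
        rw [Complex.sin_arg]
      have hform2 : ∀ θ : ℝ, h θ = hstar + r * Real.sin (θ - Complex.arg z) := by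
        intro θ
        rw [hrep' θ, Real.sin_sub, hcosarg, hsinarg]
        field_simp
      refine ⟨r, Complex.arg z, ?_, hform2⟩
      rw [abs_of_pos hrpos]
      have := hp (Complex.arg z - π / 2)
      rw [hform2 (Complex.arg z - π / 2)] at this
      have harg : Complex.arg z - π / 2 - Complex.arg z = -(π / 2) := by ring
      rw [harg, Real.sin_neg, Real.sin_pi_div_two] at this
      linarith
  · rintro ⟨c₂, θ₀, hc, hform⟩
    have hfun : h = fun θ => hstar + c₂ * Real.sin (θ - θ₀) := funext hform
    subst hfun
    obtain ⟨hc1, hc2⟩ := abs_lt.mp hc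
    have dsin : ∀ θ : ℝ, HasDerivAt (fun θ : ℝ => Real.sin (θ - θ₀)) (Real.cos (θ - θ₀)) θ :=
      fun θ => by simpa [Function.comp_def] using (Real.hasDerivAt_sin (θ - θ₀)).comp θ ((hasDerivAt_id θ).sub_const θ₀)
    have dcos : ∀ θ : ℝ, HasDerivAt (fun θ : ℝ => Real.cos (θ - θ₀)) (-Real.sin (θ - θ₀)) θ :=
      fun θ => by simpa [Function.comp_def] using (Real.hasDerivAt_cos (θ - θ₀)).comp θ ((hasDerivAt_id θ).sub_const θ₀)
    have d1 : ∀ θ : ℝ, HasDerivAt (fun θ => hstar + c₂ * Real.sin (θ - θ₀))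
        (c₂ * Real.cos (θ - θ₀)) θ :=
      fun θ => ((hasDerivAt_const θ hstar).add ((dsin θ).const_mul c₂)).congr_deriv (by ring)
    have d2 : ∀ θ : ℝ, HasDerivAt (fun θ : ℝ => c₂ * Real.cos (θ - θ₀))
        (-(c₂ * Real.sin (θ - θ₀))) θ :=
      fun θ => ((dcos θ).const_mul c₂).congr_deriv (by ring)
    have d3 : ∀ θ : ℝ, HasDerivAt (fun θ : ℝ => -(c₂ * Real.sin (θ - θ₀)))
        (-(c₂ * Real.cos (θ - θ₀))) θ :=
      fun θ => (((dsin θ).const_mul c₂).neg).congr_deriv (by ring)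
    have e1 : deriv (fun θ => hstar + c₂ * Real.sin (θ - θ₀)) = fun θ => c₂ * Real.cos (θ - θ₀) :=
      funext fun θ => (d1 θ).deriv
    have e3 : iteratedDeriv 3 (fun θ => hstar + c₂ * Real.sin (θ - θ₀))
        = fun θ => -(c₂ * Real.cos (θ - θ₀)) := by
      rw [show (3:ℕ) = 2 + 1 from rfl, iteratedDeriv_succ, show (2:ℕ) = 1 + 1 from rfl,
        iteratedDeriv_succ, iteratedDeriv_one, e1]
      rw [funext fun θ => (d2 θ).deriv]
      exact funext fun θ => (d3 θ).deriv
    refine ⟨?_, ?_, ?_, ?_, ?_⟩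
    · intro x
      have : x + 2 * π - θ₀ = (x - θ₀) + 2 * π := by ring
      simp [this, Real.sin_add_two_pi]
    · exact contDiff_const.add (contDiff_const.mul
        (Real.contDiff_sin.comp (contDiff_id.sub contDiff_const)))
    · intro θ
      show 0 < hstar + c₂ * Real.sin (θ - θ₀)
      have s1 := Real.neg_one_le_sin (θ - θ₀)
      have s2 := Real.sin_le_one (θ - θ₀)
      rcases le_or_gt 0 c₂ with hle | hlt
      · nlinarith [mul_le_mul_of_nonneg_left s1 hle]
      · nlinarith [mul_le_mul_of_nonpos_left s2 hlt.le]
    · intro θ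
      have : (fun φ => (hstar + c₂ * Real.sin (φ - θ₀)) ^ 3 *
          (deriv (fun θ => hstar + c₂ * Real.sin (θ - θ₀)) φ
            + iteratedDeriv 3 (fun θ => hstar + c₂ * Real.sin (θ - θ₀)) φ)) = fun _ => (0:ℝ) := by
        funext φ
        rw [e1, e3]
        ring
      rw [this]
      simp
    · have hcont : Continuous (fun θ : ℝ => c₂ * Real.sin (θ - θ₀)) := by fun_prop
      show (∫ θ in (0:ℝ)..(2 * π), (hstar + c₂ * Real.sin (θ - θ₀))) = 2 * π * hstar
      rw [intervalIntegral.integral_add intervalIntegrable_const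
        (hcont.intervalIntegrable _ _)]
      rw [intervalIntegral.integral_const_mul, intervalIntegral.integral_comp_sub_right _ θ₀,
        integral_sin]
      simp [Real.cos_sub, Real.cos_two_pi, Real.sin_two_pi]
end
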